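/- Let C₁, …, C_n be symmetric positive-semidefinite matrices with generalized inverses C_i⁻ (C_i C_i⁻ C_i = C_i), and let x_i be vectors with C_i C_i⁻ x_i = x_i and x_iᵀ C_i⁻ x_i = 1 for each i. Define the block matrix C with diagonal blocks C_i and off-diagonal blocks x_i x_jᵀ (i ≠ j), the block-diagonal matrix C̃ with blocks C_i⁻, and μ = (C_1⁻ x_1, …, C_n⁻ x_n) stacked. Then C C̃ C = C + (n−1)·x xᵀ where x = (x_1, …, x_n) stacked, and C μ = n·x; consequently C̃ − ((n−1)/n²) μ μᵀ is a generalized inverse of C. -/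

import Mathlib

open Matrix Finset

private lemma sum_sigma_univ {n : ℕ} {κ : Fin n → Type*} [∀ i, Fintype (κ i)]
    (f : (Σ i, κ i) → ℝ) : ∑ p : Σ i, κ i, f p = ∑ i, ∑ k, f ⟨i, k⟩ := by
  rw [← Finset.univ_sigma_univ, Finset.sum_sigma]

private lemma mul_vecMulVec_mul {m : Type*} [Fintype m] (A B : Matrix m m ℝ) (u v : m → ℝ) :
    A * vecMulVec u v * B = vecMulVec (A *ᵥ u) (v ᵥ* B) := by
  rw [vecMulVec_eq (ι := Unit), vecMulVec_eq (ι := Unit), replicateCol_mulVec, replicateRow_vecMul]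
  simp only [Matrix.mul_assoc]

theorem block_genInv_observation_point {n : ℕ}
    (κ : Fin n → Type*) [∀ i, Fintype (κ i)] [∀ i, DecidableEq (κ i)]
    (C Cinv : ∀ i, Matrix (κ i) (κ i) ℝ)
    (x : ∀ i, κ i → ℝ)
    (hPSD : ∀ i, (C i).PosSemidef)
    (hginv : ∀ i, C i * Cinv i * C i = C i)
    (hfix : ∀ i, (C i).mulVec ((Cinv i).mulVec (x i)) = x i)
    (hone : ∀ i, x i ⬝ᵥ (Cinv i).mulVec (x i) = 1)
    (bigC bigTilde : Matrix (Σ i, κ i) (Σ i, κ i) ℝ)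
    (hbigC : ∀ p q : Σ i, κ i,
      bigC p q = if h : p.1 = q.1 then C q.1 (h ▸ p.2) q.2 else x p.1 p.2 * x q.1 q.2)
    (hbigTilde : ∀ p q : Σ i, κ i,
      bigTilde p q = if h : p.1 = q.1 then Cinv q.1 (h ▸ p.2) q.2 else 0)
    (μ bigx : (Σ i, κ i) → ℝ)
    (hμ : ∀ p : Σ i, κ i, μ p = (Cinv p.1).mulVec (x p.1) p.2)
    (hbigx : ∀ p : Σ i, κ i, bigx p = x p.1 p.2) :
    bigC * bigTilde * bigC = bigC + ((n : ℝ) - 1) • Matrix.vecMulVec bigx bigx ∧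
    bigC.mulVec μ = (n : ℝ) • bigx ∧
    bigC * (bigTilde - (((n : ℝ) - 1) / (n : ℝ) ^ 2) • Matrix.vecMulVec μ μ) * bigC
      = bigC := by
  classical
  rcases Nat.eq_zero_or_pos n with h0 | hn
  · subst h0
    refine ⟨?_, ?_, ?_⟩
    · ext ⟨i, a⟩ _; exact i.elim0
    · funext ⟨i, a⟩; exact i.elim0
    · ext ⟨i, a⟩ _; exact i.elim0
  -- entry lemmas
  have hCd : ∀ (i : Fin n) (a b : κ i), bigC ⟨i, a⟩ ⟨i, b⟩ = C i a b := by
    intro i a b; rw [hbigC]; exact dif_pos rfl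
  have hCo : ∀ (i j : Fin n), i ≠ j → ∀ (a : κ i) (b : κ j),
      bigC ⟨i, a⟩ ⟨j, b⟩ = x i a * x j b := by
    intro i j h a b; rw [hbigC]; exact dif_neg h
  have hTd : ∀ (i : Fin n) (a b : κ i), bigTilde ⟨i, a⟩ ⟨i, b⟩ = Cinv i a b := by
    intro i a b; rw [hbigTilde]; exact dif_pos rfl
  have hTo : ∀ (i j : Fin n), i ≠ j → ∀ (a : κ i) (b : κ j),
      bigTilde ⟨i, a⟩ ⟨j, b⟩ = 0 := by
    intro i j h a b; rw [hbigTilde]; exact dif_neg h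
  have hsymm : ∀ i, (C i)ᵀ = C i := fun i => by simpa using (hPSD i).1.eq
  have hxvC : ∀ i, ((Cinv i) *ᵥ (x i)) ᵥ* C i = x i := by
    intro i
    rw [← hsymm i, vecMul_transpose, hfix]
  have hxCinvC : ∀ i, (x i) ᵥ* (Cinv i * C i) = x i := by
    intro i
    conv_lhs => rw [← hxvC i]
    rw [vecMul_vecMul, ← Matrix.mul_assoc, hginv i, hxvC i]
  have hdot : ∀ i, ((x i) ᵥ* (Cinv i)) ⬝ᵥ x i = 1 := by
    intro i; rw [← dotProduct_mulVec, hone i]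
  have hfix2 : ∀ i, (C i * Cinv i) *ᵥ x i = x i := by
    intro i; rw [← Matrix.mulVec_mulVec, hfix]
  -- the product bigC * bigTilde, entrywise
  have hDd : ∀ (i : Fin n) (a b : κ i),
      (bigC * bigTilde) ⟨i, a⟩ ⟨i, b⟩ = (C i * Cinv i) a b := by
    intro i a b
    rw [Matrix.mul_apply, sum_sigma_univ (fun r => bigC ⟨i, a⟩ r * bigTilde r ⟨i, b⟩),
      Finset.sum_eq_single i]
    · rw [Matrix.mul_apply]
      exact Finset.sum_congr rfl fun k _ => by rw [hCd, hTd]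
    · intro l _ hl
      exact Finset.sum_eq_zero fun k _ => by rw [hTo l i hl, mul_zero]
    · simp
  have hDo : ∀ (i j : Fin n), i ≠ j → ∀ (a : κ i) (b : κ j),
      (bigC * bigTilde) ⟨i, a⟩ ⟨j, b⟩ = x i a * ((x j) ᵥ* (Cinv j)) b := by
    intro i j hij a b
    rw [Matrix.mul_apply, sum_sigma_univ (fun r => bigC ⟨i, a⟩ r * bigTilde r ⟨j, b⟩),
      Finset.sum_eq_single j]
    · have h1 : ∀ k : κ j, bigC ⟨i, a⟩ ⟨j, k⟩ * bigTilde ⟨j, k⟩ ⟨j, b⟩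
          = x i a * (x j k * Cinv j k b) := fun k => by rw [hCo i j hij, hTd]; ring
      rw [Finset.sum_congr rfl fun k _ => h1 k, ← Finset.mul_sum]
      rfl
    · intro l _ hl
      exact Finset.sum_eq_zero fun k _ => by rw [hTo l j hl, mul_zero]
    · simp
  have claim1 : bigC * bigTilde * bigC
      = bigC + ((n : ℝ) - 1) • Matrix.vecMulVec bigx bigx := by
    ext ⟨i, a⟩ ⟨j, b⟩
    rw [Matrix.mul_apply,
      sum_sigma_univ (fun r => (bigC * bigTilde) ⟨i, a⟩ r * bigC r ⟨j, b⟩),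
      Matrix.add_apply, Matrix.smul_apply, vecMulVec_apply, hbigx, hbigx]
    by_cases hij : i = j
    · subst hij
      rw [Fintype.sum_eq_add_sum_compl i]
      have hmain : (∑ k, (bigC * bigTilde) ⟨i, a⟩ ⟨i, k⟩ * bigC ⟨i, k⟩ ⟨i, b⟩)
          = C i a b := by
        have h1 : ∀ k : κ i, (bigC * bigTilde) ⟨i, a⟩ ⟨i, k⟩ * bigC ⟨i, k⟩ ⟨i, b⟩
            = (C i * Cinv i) a k * C i k b := fun k => by rw [hDd, hCd]
        rw [Finset.sum_congr rfl fun k _ => h1 k, ← Matrix.mul_apply, hginv i]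
      have hrest : ∀ l, l ≠ i →
          (∑ k, (bigC * bigTilde) ⟨i, a⟩ ⟨l, k⟩ * bigC ⟨l, k⟩ ⟨i, b⟩)
            = x i a * x i b := by
        intro l hl
        have h1 : ∀ k : κ l, (bigC * bigTilde) ⟨i, a⟩ ⟨l, k⟩ * bigC ⟨l, k⟩ ⟨i, b⟩
            = (x i a * x i b) * (((x l) ᵥ* (Cinv l)) k * x l k) := fun k => by
          rw [hDo i l (fun h => hl h.symm), hCo l i hl]; ring
        rw [Finset.sum_congr rfl fun k _ => h1 k, ← Finset.mul_sum]
        have h2 : (∑ k, ((x l) ᵥ* (Cinv l)) k * x l k) = 1 := hdot l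
        rw [h2, mul_one]
      rw [hmain, Finset.sum_congr rfl (fun l hl => hrest l (by simpa using hl)),
        Finset.sum_const, Finset.card_compl, Finset.card_singleton, Fintype.card_fin,
        hCd, nsmul_eq_mul, smul_eq_mul]
      have hc : ((n - 1 : ℕ) : ℝ) = (n : ℝ) - 1 := by
        rw [Nat.cast_sub hn]; norm_num
      rw [hc]
    · have key : ∀ l : Fin n,
          (∑ k, (bigC * bigTilde) ⟨i, a⟩ ⟨l, k⟩ * bigC ⟨l, k⟩ ⟨j, b⟩)
            = x i a * x j b := by
        intro l
        by_cases hli : l = i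
        · subst hli
          have h1 : ∀ k : κ l, (bigC * bigTilde) ⟨l, a⟩ ⟨l, k⟩ * bigC ⟨l, k⟩ ⟨j, b⟩
              = ((C l * Cinv l) a k * x l k) * x j b := fun k => by
            rw [hDd, hCo l j hij]; ring
          rw [Finset.sum_congr rfl fun k _ => h1 k, ← Finset.sum_mul]
          have h2 : (∑ k, (C l * Cinv l) a k * x l k) = x l a := by
            have := congrFun (hfix2 l) a
            rw [← this]; rfl
          rw [h2]
        · by_cases hlj : l = j
          · subst hlj
            have h1 : ∀ k : κ l, (bigC * bigTilde) ⟨i, a⟩ ⟨l, k⟩ * bigC ⟨l, k⟩ ⟨l, b⟩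
                = x i a * (((x l) ᵥ* (Cinv l)) k * C l k b) := fun k => by
              rw [hDo i l hij, hCd]; ring
            rw [Finset.sum_congr rfl fun k _ => h1 k, ← Finset.mul_sum]
            have h2 : (∑ k, ((x l) ᵥ* (Cinv l)) k * C l k b) = x l b := by
              have := congrFun (hxCinvC l) b
              rw [← this, ← Matrix.vecMul_vecMul]; rfl
            rw [h2]
          · have h1 : ∀ k : κ l, (bigC * bigTilde) ⟨i, a⟩ ⟨l, k⟩ * bigC ⟨l, k⟩ ⟨j, b⟩
                = (x i a * x j b) * (((x l) ᵥ* (Cinv l)) k * x l k) := fun k => by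
              rw [hDo i l (fun h => hli h.symm), hCo l j (fun h => hlj h)]; ring
            rw [Finset.sum_congr rfl fun k _ => h1 k, ← Finset.mul_sum]
            have h2 : (∑ k, ((x l) ᵥ* (Cinv l)) k * x l k) = 1 := hdot l
            rw [h2, mul_one]
      rw [Finset.sum_congr rfl (fun l _ => key l), Finset.sum_const, Finset.card_univ,
        Fintype.card_fin, nsmul_eq_mul, hCo i j hij, smul_eq_mul]
      ring
  have claim2 : bigC.mulVec μ = (n : ℝ) • bigx := by
    funext ⟨i, a⟩
    show (∑ r : Σ l, κ l, bigC ⟨i, a⟩ r * μ r) = ((n : ℝ) • bigx) ⟨i, a⟩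
    rw [sum_sigma_univ (fun r => bigC ⟨i, a⟩ r * μ r)]
    have key : ∀ l : Fin n, (∑ k, bigC ⟨i, a⟩ ⟨l, k⟩ * μ ⟨l, k⟩) = x i a := by
      intro l
      by_cases hli : l = i
      · subst hli
        have h1 : ∀ k : κ l, bigC ⟨l, a⟩ ⟨l, k⟩ * μ ⟨l, k⟩
            = C l a k * ((Cinv l) *ᵥ (x l)) k := fun k => by rw [hCd, hμ]
        rw [Finset.sum_congr rfl fun k _ => h1 k]
        have := congrFun (hfix l) a
        rw [← this]; rfl
      · have h1 : ∀ k : κ l, bigC ⟨i, a⟩ ⟨l, k⟩ * μ ⟨l, k⟩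
            = x i a * (x l k * ((Cinv l) *ᵥ (x l)) k) := fun k => by
          rw [hCo i l (fun h => hli h.symm), hμ]; ring
        rw [Finset.sum_congr rfl fun k _ => h1 k, ← Finset.mul_sum]
        have h2 : (∑ k, x l k * ((Cinv l) *ᵥ (x l)) k) = 1 := hone l
        rw [h2, mul_one]
    rw [Finset.sum_congr rfl (fun l _ => key l), Finset.sum_const, Finset.card_univ,
      Fintype.card_fin, nsmul_eq_mul]
    rw [Pi.smul_apply, smul_eq_mul, hbigx]
  refine ⟨claim1, claim2, ?_⟩
  have hsymmBig : bigCᵀ = bigC := by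
    ext ⟨i, a⟩ ⟨j, b⟩
    rw [transpose_apply]
    by_cases h : i = j
    · subst h
      rw [hCd, hCd]
      exact congrFun (congrFun (hsymm i) a) b
    · rw [hCo j i (fun hh => h hh.symm), hCo i j h, mul_comm]
  have hμC : μ ᵥ* bigC = (n : ℝ) • bigx := by
    rw [← hsymmBig, vecMul_transpose, claim2]
  have hvv : vecMulVec ((n : ℝ) • bigx) ((n : ℝ) • bigx)
      = ((n : ℝ) * (n : ℝ)) • vecMulVec bigx bigx := by
    ext p q
    simp [vecMulVec_apply]
    ring
  rw [Matrix.mul_sub, Matrix.sub_mul, claim1, Matrix.mul_smul, Matrix.smul_mul,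
    mul_vecMulVec_mul, claim2, hμC, hvv, smul_smul]
  have hn1 : ((n : ℝ) - 1) / (n : ℝ) ^ 2 * ((n : ℝ) * (n : ℝ)) = (n : ℝ) - 1 := by
    have hne : (n : ℝ) ≠ 0 := by exact_mod_cast hn.ne'
    rw [sq, div_mul_cancel₀ _ (mul_ne_zero hne hne)]
  rw [hn1, add_sub_cancel_right]
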